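/- Let c ∈ ℝ, let f : ℝ → ℝ be six times continuously differentiable, and fix x ∈ ℝ. Then the two BFD stencils are third-order accurate approximations of f''(x): as h → 0⁺, (S⁻ₕf(x) − f''(x))/h³ → −c f⁽⁵⁾(x)/96 and (S⁺ₕf(x) − f''(x))/h³ → c f⁽⁵⁾(x)/96. -/

import Mathlib

open Filter Topology

/-- The BFD stencil `S⁻ₕ` (node `x_{j-1/4}`) applied to `f : ℝ → ℝ`. -/
noncomputable def SminusR (c h : ℝ) (f : ℝ → ℝ) (x : ℝ) : ℝ :=
  (1/(3*h^2)) *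
    ((-f (x-h) + 16*f (x-h/2) - 30*f x + 16*f (x+h/2) - f (x+h)) +
      c * (f (x-h) - 5*f (x-h/2) + 10*f x - 10*f (x+h/2) + 5*f (x+h)
        - f (x+3*h/2)))

/-- The BFD stencil `S⁺ₕ` (node `x_{j+1/4}`) applied to `f : ℝ → ℝ`. -/
noncomputable def SplusR (c h : ℝ) (f : ℝ → ℝ) (x : ℝ) : ℝ :=
  (1/(3*h^2)) *
    ((-f (x-h) + 16*f (x-h/2) - 30*f x + 16*f (x+h/2) - f (x+h)) +
      c * (-f (x-3*h/2) + 5*f (x-h) - 10*f (x-h/2) + 10*f x - 5*f (x+h/2)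
        + f (x+h)))

open Filter Topology Asymptotics

lemma taylor_peano (n : ℕ) (f : ℝ → ℝ) (hf : ContDiff ℝ n f) (x : ℝ) :
    (fun t : ℝ => f (x + t) -
        ∑ k ∈ Finset.range (n+1), iteratedDeriv k f x / (k.factorial : ℝ) * t ^ k)
      =o[𝓝 (0:ℝ)] fun t => t ^ n := by
  induction n generalizing f with
  | zero =>
      simp only [Finset.sum_range_one, iteratedDeriv_zero, pow_zero, mul_one,
        Nat.factorial_zero, Nat.cast_one, div_one]
      rw [Asymptotics.isLittleO_one_iff]
      have : Tendsto (fun t : ℝ => f (x + t)) (𝓝 0) (𝓝 (f (x + 0))) :=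
        (hf.continuous.comp (continuous_const.add continuous_id)).tendsto 0
      simpa using this.sub_const (f x)
  | succ n ih =>
      have hf' : Differentiable ℝ f ∧ ContDiff ℝ n (deriv f) := by
        have : ContDiff ℝ ((n : ℕ∞) + 1) f := by exact_mod_cast hf
        have h2 := (contDiff_succ_iff_deriv).mp this
        exact ⟨h2.1, h2.2.2⟩
      set g : ℝ → ℝ := fun t => f (x + t) -
        ∑ k ∈ Finset.range (n+2), iteratedDeriv k f x / (k.factorial : ℝ) * t ^ k with hg
      set g₁ : ℝ → ℝ := fun t => deriv f (x + t) -
        ∑ k ∈ Finset.range (n+1), iteratedDeriv k (deriv f) x / (k.factorial : ℝ) * t ^ k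
        with hg₁
      have hder : ∀ t : ℝ, HasDerivAt g (g₁ t) t := by
        intro t
        have h1 : HasDerivAt (fun t : ℝ => f (x + t)) (deriv f (x + t)) t := by
          have := ((hf'.1 (x + t)).hasDerivAt).comp t ((hasDerivAt_id t).const_add x)
          simpa [Function.comp_def] using this
        have h2 : HasDerivAt
            (fun t : ℝ => ∑ k ∈ Finset.range (n+2),
              iteratedDeriv k f x / (k.factorial : ℝ) * t ^ k)
            (∑ k ∈ Finset.range (n+2),
              iteratedDeriv k f x / (k.factorial : ℝ) * ((k : ℝ) * t ^ (k-1))) t := by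
          apply HasDerivAt.fun_sum
          intro k _
          exact (hasDerivAt_pow k t).const_mul _
        have h3 : (∑ k ∈ Finset.range (n+2),
              iteratedDeriv k f x / (k.factorial : ℝ) * ((k : ℝ) * t ^ (k-1)))
            = ∑ k ∈ Finset.range (n+1),
              iteratedDeriv k (deriv f) x / (k.factorial : ℝ) * t ^ k := by
          rw [Finset.sum_range_succ']
          simp only [Nat.cast_zero, Nat.cast_succ, Nat.factorial_succ, Nat.add_sub_cancel,
            Nat.cast_mul, iteratedDeriv_succ']
          have : ∀ k ∈ Finset.range (n+1),
              iteratedDeriv k (deriv f) x / (((k:ℝ)+1) * (k.factorial : ℝ)) *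
                (((k:ℝ)+1) * t ^ k)
              = iteratedDeriv k (deriv f) x / (k.factorial : ℝ) * t ^ k := by
            intro k _
            have hk : ((k:ℝ)+1) ≠ 0 := by positivity
            field_simp
          rw [Finset.sum_congr rfl this]
          simp
        have h4 := h1.sub h2
        rw [h3] at h4
        exact h4
      have hcontg₁ : Continuous g₁ := by
        apply Continuous.sub
        · exact hf'.2.continuous.comp (continuous_const.add continuous_id)
        · continuity
      have ho := ih (deriv f) hf'.2
      rw [Asymptotics.isLittleO_iff]
      intro ε hε
      have ho' := (Asymptotics.isLittleO_iff.mp ho) hε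
      rcases Metric.eventually_nhds_iff.mp ho' with ⟨δ, hδ, hball⟩
      rw [Metric.eventually_nhds_iff]
      refine ⟨δ, hδ, fun t ht => ?_⟩
      have hg0 : g 0 = 0 := by
        simp [hg, Finset.sum_range_succ']
      have hint : ∫ s in (0:ℝ)..t, g₁ s = g t - g 0 :=
        intervalIntegral.integral_eq_sub_of_hasDerivAt (fun s _ => hder s)
          (hcontg₁.intervalIntegrable 0 t)
      have habs : ∀ s ∈ Set.uIoc (0:ℝ) t, ‖g₁ s‖ ≤ ε * |t| ^ n := by
        intro s hs
        have hst : |s| ≤ |t| := by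
          rcases Set.mem_uIoc.mp hs with h | h
          · rw [abs_of_pos h.1, abs_of_nonneg (h.1.le.trans h.2)]; exact h.2
          · rw [abs_of_nonpos h.2, abs_of_neg (h.1.trans_le h.2)]; linarith [h.1]
        have hsd : dist s 0 < δ := by
          rw [Real.dist_eq, sub_zero]
          calc |s| ≤ |t| := hst
          _ < δ := by simpa [Real.dist_eq] using ht
        calc ‖g₁ s‖ ≤ ε * ‖s ^ n‖ := hball hsd
        _ ≤ ε * |t| ^ n := by
            rw [Real.norm_eq_abs, abs_pow]
            exact mul_le_mul_of_nonneg_left (pow_le_pow_left₀ (abs_nonneg s) hst n) hε.le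
      have := intervalIntegral.norm_integral_le_of_norm_le_const habs
      rw [hint, hg0, sub_zero, sub_zero] at this
      calc ‖g t‖ ≤ ε * |t| ^ n * |t| := this
      _ = ε * ‖t ^ (n+1)‖ := by
          rw [Real.norm_eq_abs, abs_pow, pow_succ]; ring

set_option maxHeartbeats 2000000 in
/-- The BFD stencils are third-order accurate approximations of `f''(x)`:
as `h → 0⁺`, `(S⁻ₕf(x) − f''(x))/h³ → −c f⁽⁵⁾(x)/96` and
`(S⁺ₕf(x) − f''(x))/h³ → c f⁽⁵⁾(x)/96`. -/
theorem bfd_truncation_error (c : ℝ) (f : ℝ → ℝ) (hf : ContDiff ℝ 6 f) (x : ℝ) :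
    Tendsto (fun h : ℝ => (SminusR c h f x - iteratedDeriv 2 f x)/h^3) (𝓝[>] 0)
      (𝓝 (-c * iteratedDeriv 5 f x / 96)) ∧
    Tendsto (fun h : ℝ => (SplusR c h f x - iteratedDeriv 2 f x)/h^3) (𝓝[>] 0)
      (𝓝 (c * iteratedDeriv 5 f x / 96)) := by
  have hf5 : ContDiff ℝ (5 : ℕ) f := hf.of_le (by norm_num)
  set R : ℝ → ℝ := fun t => f (x + t) -
      ∑ k ∈ Finset.range 6, iteratedDeriv k f x / (k.factorial : ℝ) * t ^ k with hRdef
  have hRo : R =o[𝓝 (0:ℝ)] fun t => t ^ 5 := taylor_peano 5 f hf5 x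
  have key : ∀ t : ℝ, f (x + t) = f x + iteratedDeriv 1 f x * t
      + iteratedDeriv 2 f x/2*t^2 + iteratedDeriv 3 f x/6*t^3
      + iteratedDeriv 4 f x/24*t^4 + iteratedDeriv 5 f x/120*t^5 + R t := by
    intro t
    rw [hRdef]
    simp only [Finset.sum_range_succ, Finset.sum_range_zero, iteratedDeriv_zero]
    norm_num [Nat.factorial]
  have base : ∀ a : ℝ, Tendsto (fun h : ℝ => R (a*h)/h^5) (𝓝[>] (0:ℝ)) (𝓝 0) := by
    intro a
    have h1 : Tendsto (fun h : ℝ => a * h) (𝓝[>] (0:ℝ)) (𝓝 0) := by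
      have ha : Tendsto (fun h : ℝ => a * h) (𝓝 (0:ℝ)) (𝓝 (a * 0)) :=
        (continuous_const.mul continuous_id).tendsto (0:ℝ)
      simpa using ha.mono_left nhdsWithin_le_nhds
    have h2 := hRo.comp_tendsto h1
    have h3 : (fun h : ℝ => (a*h)^5) =O[𝓝[>] (0:ℝ)] (fun h : ℝ => h^5) := by
      simpa [mul_pow] using
        (Asymptotics.isBigO_refl (fun h : ℝ => h^5) (𝓝[>] (0:ℝ))).const_mul_left (a^5)
    have h4 : (fun h : ℝ => R (a*h)) =o[𝓝[>] (0:ℝ)] (fun h : ℝ => h^5) := by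
      refine (h2.congr ?_ ?_).trans_isBigO h3 <;> intro y <;> simp [Function.comp]
    exact h4.tendsto_div_nhds_zero
  have hne : ∀ᶠ h in 𝓝[>] (0:ℝ), (h:ℝ) ≠ 0 := by
    filter_upwards [self_mem_nhdsWithin] with h hh
    exact ne_of_gt hh
  constructor
  · have hlim : Tendsto (fun h : ℝ => -c * iteratedDeriv 5 f x / 96 +
        ((c-1)*(R (-1*h)/h^5) + (16-5*c)*(R (-(1:ℝ)/2*h)/h^5)
          + (16-10*c)*(R ((1:ℝ)/2*h)/h^5) + (5*c-1)*(R (1*h)/h^5)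
          + (-c)*(R ((3:ℝ)/2*h)/h^5))/3)
        (𝓝[>] (0:ℝ)) (𝓝 (-c * iteratedDeriv 5 f x / 96)) := by
      have combined := (((((base (-1)).const_mul (c-1)).add
        ((base (-(1:ℝ)/2)).const_mul (16-5*c))).add
        ((base ((1:ℝ)/2)).const_mul (16-10*c))).add
        ((base 1).const_mul (5*c-1))).add
        ((base ((3:ℝ)/2)).const_mul (-c))
      have := (combined.div_const 3).const_add (-c * iteratedDeriv 5 f x / 96)
      simpa using this
    refine hlim.congr' ?_
    filter_upwards [hne] with h hh
    rw [SminusR, show x - h = x + (-1*h) from by ring,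
      show x - h/2 = x + (-(1:ℝ)/2*h) from by ring,
      show x + h/2 = x + ((1:ℝ)/2*h) from by ring,
      show x + h = x + (1*h) from by ring,
      show x + 3*h/2 = x + ((3:ℝ)/2*h) from by ring,
      key (-1*h), key (-(1:ℝ)/2*h), key ((1:ℝ)/2*h), key (1*h), key ((3:ℝ)/2*h)]
    field_simp
    ring
  · have hlim : Tendsto (fun h : ℝ => c * iteratedDeriv 5 f x / 96 +
        ((-c)*(R (-(3:ℝ)/2*h)/h^5) + (5*c-1)*(R (-1*h)/h^5)
          + (16-10*c)*(R (-(1:ℝ)/2*h)/h^5) + (16-5*c)*(R ((1:ℝ)/2*h)/h^5)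
          + (c-1)*(R (1*h)/h^5))/3)
        (𝓝[>] (0:ℝ)) (𝓝 (c * iteratedDeriv 5 f x / 96)) := by
      have combined := (((((base (-(3:ℝ)/2)).const_mul (-c)).add
        ((base (-1)).const_mul (5*c-1))).add
        ((base (-(1:ℝ)/2)).const_mul (16-10*c))).add
        ((base ((1:ℝ)/2)).const_mul (16-5*c))).add
        ((base 1).const_mul (c-1))
      have := (combined.div_const 3).const_add (c * iteratedDeriv 5 f x / 96)
      simpa using this
    refine hlim.congr' ?_
    filter_upwards [hne] with h hh
    rw [SplusR, show x - h = x + (-1*h) from by ring,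
      show x - h/2 = x + (-(1:ℝ)/2*h) from by ring,
      show x + h/2 = x + ((1:ℝ)/2*h) from by ring,
      show x + h = x + (1*h) from by ring,
      show x - 3*h/2 = x + (-(3:ℝ)/2*h) from by ring,
      key (-1*h), key (-(1:ℝ)/2*h), key ((1:ℝ)/2*h), key (1*h), key (-(3:ℝ)/2*h)]
    field_simp
    ring
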